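/- arXiv:2208.04674 — 4 statements merged into one kernel-verified Lean document; each statement's English description precedes it below -/
import Mathlib

section
/- Let $q$ be a prime power and $m \le n$ natural numbers. Then the proportion of full-rank (rank $m$) matrices among all $n \times m$ matrices over $\mathbb{F}_q$ equals $\prod_{i=1}^{m}(1 - q^{-(n-i+1)})$, and this quantity is greater than $1/4$. -/
open Finset Matrix Module

/-- tail bound for the base-2 product. -/
lemma aux_two_prod (n : ℕ) :
    1/4 + ((2:ℝ)^(n+1))⁻¹ ≤ ∏ k ∈ Icc 1 n, (1 - ((2:ℝ)^k)⁻¹) := by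
  induction n with
  | zero => simp; norm_num
  | succ n ih =>
    rw [Finset.prod_Icc_succ_top (by omega)]
    rcases Nat.eq_zero_or_pos n with rfl | hn
    · norm_num
    · set P := ∏ k ∈ Icc 1 n, (1 - ((2:ℝ)^k)⁻¹) with hP
      set e := ((2:ℝ)^(n+1))⁻¹ with he
      have he0 : 0 < e := by positivity
      have he4 : e ≤ 1/4 := by
        rw [he, inv_le_comm₀ (by positivity) (by norm_num)]
        calc (1/4 : ℝ)⁻¹ = 2^2 := by norm_num
        _ ≤ 2^(n+1) := by
          apply pow_le_pow_right₀ (by norm_num); omega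
      have h2 : ((2:ℝ)^(n+1+1))⁻¹ = e/2 := by
        rw [he, pow_succ]
        field_simp
      rw [h2]
      nlinarith [mul_le_mul_of_nonneg_right ih (by linarith : (0:ℝ) ≤ 1 - e)]

lemma aux_gt_quarter (q m n : ℕ) (hq : 2 ≤ q) (hmn : m ≤ n) :
    (∏ i ∈ Icc 1 m, (1 - ((q : ℝ) ^ (n - i + 1))⁻¹)) > 1 / 4 := by
  have hQ : (2:ℝ) ≤ (q:ℝ) := by exact_mod_cast hq
  have step1 : ∏ i ∈ Icc 1 m, (1 - ((2:ℝ) ^ (n - i + 1))⁻¹) ≤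
      ∏ i ∈ Icc 1 m, (1 - ((q:ℝ) ^ (n - i + 1))⁻¹) := by
    apply Finset.prod_le_prod
    · intro i _
      have : ((2:ℝ) ^ (n - i + 1))⁻¹ ≤ 1 := by
        rw [inv_le_one_iff₀]; right; exact one_le_pow₀ (by norm_num)
      linarith
    · intro i _
      have h1 : (0:ℝ) < 2 ^ (n - i + 1) := by positivity
      have h2 : (2:ℝ) ^ (n - i + 1) ≤ (q:ℝ) ^ (n - i + 1) :=
        pow_le_pow_left₀ (by norm_num) hQ _
      have := inv_anti₀ h1 h2
      linarith
  have nonneg2 : ∀ i : ℕ, (0:ℝ) ≤ 1 - ((2:ℝ) ^ (n - i + 1))⁻¹ := by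
    intro i
    have : ((2:ℝ) ^ (n - i + 1))⁻¹ ≤ 1 := by
      rw [inv_le_one_iff₀]; right; exact one_le_pow₀ (by norm_num)
    linarith
  have step2 : ∏ i ∈ Icc 1 n, (1 - ((2:ℝ) ^ (n - i + 1))⁻¹) ≤
      ∏ i ∈ Icc 1 m, (1 - ((2:ℝ) ^ (n - i + 1))⁻¹) := by
    have hm : Icc 1 m = Ioc 0 m := Finset.Icc_add_one_left_eq_Ioc 0 m
    have hn' : Icc 1 n = Ioc 0 n := Finset.Icc_add_one_left_eq_Ioc 0 n
    rw [hm, hn', ← Finset.prod_Ioc_consecutive _ (Nat.zero_le m) hmn]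
    apply mul_le_of_le_one_right
    · exact Finset.prod_nonneg fun i _ => nonneg2 i
    · exact Finset.prod_le_one (fun i _ => nonneg2 i) (fun i _ => by
        have : (0:ℝ) ≤ ((2:ℝ) ^ (n - i + 1))⁻¹ := by positivity
        linarith)
  have step3 : ∏ i ∈ Icc 1 n, (1 - ((2:ℝ) ^ (n - i + 1))⁻¹) =
      ∏ k ∈ Icc 1 n, (1 - ((2:ℝ) ^ k)⁻¹) := by
    apply Finset.prod_bij' (fun i _ => n - i + 1) (fun k _ => n - k + 1)
    · intro a ha
      simp only [mem_Icc] at ha ⊢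
      omega
    · intro a ha
      simp only [mem_Icc] at ha ⊢
      omega
    · intro a ha
      simp only [mem_Icc] at ha
      omega
    · intro a ha
      simp only [mem_Icc] at ha
      omega
    · intro a _
      rfl
  have h4 := aux_two_prod n
  have h5 : (0:ℝ) < ((2:ℝ)^(n+1))⁻¹ := by positivity
  calc (1/4 : ℝ) < 1/4 + ((2:ℝ)^(n+1))⁻¹ := by linarith
    _ ≤ ∏ k ∈ Icc 1 n, (1 - ((2:ℝ) ^ k)⁻¹) := h4
    _ = ∏ i ∈ Icc 1 n, (1 - ((2:ℝ) ^ (n - i + 1))⁻¹) := step3.symm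
    _ ≤ ∏ i ∈ Icc 1 m, (1 - ((2:ℝ) ^ (n - i + 1))⁻¹) := step2
    _ ≤ _ := step1

lemma aux_count (F : Type) [Field F] [Fintype F] (m n : ℕ) (hmn : m ≤ n) :
    Nat.card {M : Matrix (Fin n) (Fin m) F // M.rank = m} =
      ∏ i : Fin m, (Fintype.card F ^ n - Fintype.card F ^ i.val) := by
  have key : ∀ M : Matrix (Fin n) (Fin m) F, M.rank = m ↔ LinearIndependent F Mᵀ := by
    intro M
    constructor
    · intro h
      apply linearIndependent_iff_card_eq_finrank_span.2
      have : (Set.range Mᵀ).finrank F = finrank F (Submodule.span F (Set.range Mᵀ)) := rfl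
      rw [Fintype.card_fin, this]; exact h.symm.trans (Matrix.rank_eq_finrank_span_cols M)
    · intro h
      rw [← Matrix.rank_transpose]; exact (LinearIndependent.rank_matrix (M := Mᵀ) h).trans (Fintype.card_fin m)
  have e : {M : Matrix (Fin n) (Fin m) F // M.rank = m} ≃
      {s : Fin m → (Fin n → F) // LinearIndependent F s} :=
    { toFun := fun M => ⟨M.1ᵀ, (key M.1).1 M.2⟩
      invFun := fun s => ⟨(Matrix.of s.1)ᵀ, (key _).2 s.2⟩
      left_inv := fun M => rfl
      right_inv := fun s => rfl }
  rw [Nat.card_congr e, card_linearIndependent (K := F) (V := Fin n → F)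
      (by rw [Module.finrank_fintype_fun_eq_card, Fintype.card_fin]; exact hmn)]
  rw [Module.finrank_fintype_fun_eq_card, Fintype.card_fin]

/-- for a prime power `q` and `m ≤ n`, the proportion of full-rank
(`rank = m`) matrices among all `n × m` matrices over `𝔽_q` equals
`∏_{i=1}^{m} (1 - q^{-(n-i+1)})`, and this quantity is greater than `1/4`. -/
theorem fullRank_proportion (q p s m n : ℕ) (hp : p.Prime) (hs : 0 < s) (hq : q = p ^ s)
    (hmn : m ≤ n) (F : Type) [Field F] [Fintype F] (hF : Fintype.card F = q) :
    (Nat.card {M : Matrix (Fin n) (Fin m) F // M.rank = m} : ℝ) /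
        (Fintype.card (Matrix (Fin n) (Fin m) F) : ℝ) =
      ∏ i ∈ Finset.Icc 1 m, (1 - ((q : ℝ) ^ (n - i + 1))⁻¹) ∧
    (∏ i ∈ Finset.Icc 1 m, (1 - ((q : ℝ) ^ (n - i + 1))⁻¹)) > 1 / 4 := by
  have hq2 : 2 ≤ q := by
    rw [hq]
    calc 2 ≤ p := hp.two_le
    _ = p ^ 1 := (pow_one p).symm
    _ ≤ p ^ s := Nat.pow_le_pow_right hp.pos hs
  refine ⟨?_, aux_gt_quarter q m n hq2 hmn⟩
  have hq1 : 1 ≤ q := by omega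
  have hQ0 : (0:ℝ) < (q:ℝ) := by exact_mod_cast (by omega : 0 < q)
  have hcard : (Fintype.card (Matrix (Fin n) (Fin m) F) : ℝ) = (q:ℝ) ^ (n * m) := by
    have : Fintype.card (Matrix (Fin n) (Fin m) F) = Fintype.card (Fin n → Fin m → F) := rfl
    rw [this, Fintype.card_fun, Fintype.card_fun, hF, Fintype.card_fin, Fintype.card_fin,
      ← pow_mul]
    push_cast
    ring
  rw [aux_count F m n hmn, hF, hcard, Nat.cast_prod]
  have hcast : ∀ i : Fin m, ((q ^ n - q ^ i.val : ℕ) : ℝ) = (q:ℝ)^n - (q:ℝ)^i.val := by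
    intro i
    have : q ^ i.val ≤ q ^ n := Nat.pow_le_pow_right (by omega) (by omega)
    push_cast [Nat.cast_sub this]
    ring
  rw [Finset.prod_congr rfl (fun i _ => hcast i)]
  -- convert RHS to range
  have hR : ∏ i ∈ Finset.Icc 1 m, (1 - ((q : ℝ) ^ (n - i + 1))⁻¹) =
      ∏ i ∈ Finset.range m, (1 - ((q : ℝ) ^ (n - i))⁻¹) := by
    have h1 : Finset.Icc 1 m = Finset.Ico 1 (m+1) := rfl
    rw [h1, Finset.prod_Ico_eq_prod_range]
    simp only [Nat.add_sub_cancel]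
    apply Finset.prod_congr rfl
    intro i hi
    simp only [Finset.mem_range] at hi
    have h2 : n - (1 + i) + 1 = n - i := by omega
    rw [h2]
  rw [hR, Fin.prod_univ_eq_prod_range (fun i => (q:ℝ)^n - (q:ℝ)^i)]
  have hconst : (q:ℝ) ^ (n * m) = ∏ _i ∈ Finset.range m, (q:ℝ)^n := by
    rw [Finset.prod_const, Finset.card_range, ← pow_mul]
  rw [hconst, ← Finset.prod_div_distrib]
  apply Finset.prod_congr rfl
  intro i hi
  simp only [Finset.mem_range] at hi
  have hin : i ≤ n := by omega
  have hQn : (q:ℝ)^n ≠ 0 := by positivity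
  have hQi : (q:ℝ)^i ≠ 0 := by positivity
  rw [sub_div, div_self hQn, pow_sub₀ _ (ne_of_gt hQ0) hin]
  rw [mul_inv, inv_inv]
  congr 1
  rw [inv_mul_eq_div]
end

section
/- Let $V, W$ be finite-dimensional vector spaces over a field $\mathbb{F}$, let $\lambda_1, \ldots, \lambda_r \in \mathbb{F} \setminus \{0\}$, and let $X_1, \ldots, X_r \colon W \to V$ be rank-one linear maps with $\sum_{i=1}^{r} \lambda_i X_i = 0$. Then $\dim\left(\sum_{i=1}^r \operatorname{Im}(X_i)\right) + \operatorname{codim}\left(\bigcap_{i=1}^r \ker(X_i)\right) \le r$. -/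
open Module

/-- if `X₁, …, X_r : W → V` are rank-one linear maps with
`∑ λᵢ Xᵢ = 0` for nonzero scalars `λᵢ`, then
`dim (∑ Im Xᵢ) + codim (⋂ ker Xᵢ) ≤ r`. -/
theorem rank_one_sum_rank_nullity (F : Type) [Field F]
    (V W : Type) [AddCommGroup V] [Module F V] [AddCommGroup W] [Module F W]
    [FiniteDimensional F V] [FiniteDimensional F W]
    (r : ℕ) (lam : Fin r → F) (X : Fin r → (W →ₗ[F] V))
    (hlam : ∀ i, lam i ≠ 0)
    (hrank : ∀ i, finrank F (LinearMap.range (X i)) = 1)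
    (hsum : ∑ i, lam i • X i = 0) :
    finrank F (⨆ i, LinearMap.range (X i) : Submodule F V) +
      (finrank F W - finrank F (⨅ i, LinearMap.ker (X i) : Submodule F W)) ≤ r := by
  classical
  set M : Fin r → Submodule F V := fun i => LinearMap.range (X i) with hM
  let Ψ : W →ₗ[F] (Π i, M i) :=
    { toFun := fun w i => ⟨lam i • X i w,
        Submodule.smul_mem _ _ (LinearMap.mem_range_self _ w)⟩
      map_add' := by intro x y; funext i; ext; simp [smul_add]
      map_smul' := by
        intro c x; funext i; ext
        show lam i • X i (c • x) = c • (lam i • X i x)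
        rw [map_smul, smul_comm] }
  let h : (Π i, M i) →ₗ[F] V :=
    { toFun := fun v => ∑ i, (v i : V)
      map_add' := by intro x y; simp [Finset.sum_add_distrib]
      map_smul' := by intro c x; simp [Finset.smul_sum] }
  have hΨapp : ∀ w i, (Ψ w i : V) = lam i • X i w := fun _ _ => rfl
  have hkerΨ : LinearMap.ker Ψ = ⨅ i, LinearMap.ker (X i) := by
    ext w
    simp only [LinearMap.mem_ker, Submodule.mem_iInf]
    constructor
    · intro hw i
      have : (Ψ w i : V) = 0 := by rw [hw]; rfl
      rw [hΨapp] at this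
      rcases smul_eq_zero.mp this with h1 | h1
      · exact absurd h1 (hlam i)
      · exact h1
    · intro hw
      funext i
      ext
      rw [hΨapp, hw i, smul_zero]; rfl
  have hle : LinearMap.range Ψ ≤ LinearMap.ker h := by
    rintro _ ⟨w, rfl⟩
    have := congrArg (fun f : W →ₗ[F] V => f w) hsum
    simp only [LinearMap.sum_apply, LinearMap.smul_apply, LinearMap.zero_apply] at this
    simpa [LinearMap.mem_ker, h, hΨapp] using this
  have hrangeh : LinearMap.range h = ⨆ i, M i := by
    apply le_antisymm
    · rintro _ ⟨v, rfl⟩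
      show ∑ i, ((v i : V)) ∈ ⨆ i, M i
      exact Submodule.sum_mem _ fun i _ =>
        Submodule.mem_iSup_of_mem i (v i).2
    · rw [iSup_le_iff]
      intro i x hx
      refine ⟨Pi.single i ⟨x, hx⟩, ?_⟩
      show ∑ j, ((Pi.single i (⟨x, hx⟩ : M i) : Π j, M j) j : V) = x
      rw [Finset.sum_eq_single i]
      · simp
      · intro j _ hj
        rw [Pi.single_eq_of_ne hj]; rfl
      · simp
  have hdom : finrank F (Π i, M i) = r := by
    rw [Module.finrank_pi_fintype]
    simp [show ∀ i, finrank F (M i) = 1 from hrank]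
  have h1 := LinearMap.finrank_range_add_finrank_ker h
  have h2 := LinearMap.finrank_range_add_finrank_ker Ψ
  rw [hdom] at h1
  rw [hkerΨ] at h2
  rw [hrangeh] at h1
  have h3 : finrank F (LinearMap.range Ψ) ≤ finrank F (LinearMap.ker h) :=
    Submodule.finrank_mono hle
  rw [show (⨆ i, M i : Submodule F V) = iSup M from rfl] at h1
  omega
end

section
/- Let $q$ be a prime power, let $V$ be an $n$-dimensional vector space over $\mathbb{F}_q$, let $U$ be a $k$-dimensional subspace of $V$, and suppose $d \in \mathbb{N}$ with $k + d \le n$. Then the number of $d$-dimensional subspaces $W$ of $V$ with $W \cap U = \{0\}$ equals $\prod_{i=1}^{d}(q^n - q^{k+i-1}) / \prod_{i=1}^{d}(q^d - q^{i-1})$, and this is at least $\frac{1}{4}{n \brack d}_q$. -/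
open Module Submodule Finset

/-- The Gaussian binomial coefficient `[m choose d]_q`, as a real number. -/
noncomputable def gaussBinom (q : ℝ) (m d : ℕ) : ℝ :=
  (∏ i ∈ Finset.range d, (q ^ (m - i) - 1)) / (∏ i ∈ Finset.range d, (q ^ (d - i) - 1))


section AuxIneq

lemma prod_half_ge (d : ℕ) :
    1/4 + (1/2:ℝ)^(d+1) ≤ ∏ j ∈ Finset.range d, (1 - (1/2:ℝ)^(j+1)) := by
  induction d with
  | zero => norm_num
  | succ m ih =>
    rw [Finset.prod_range_succ]
    rcases Nat.eq_zero_or_pos m with h | h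
    · subst h; norm_num
    · have hx : ((1:ℝ)/2)^(m+1) ≤ 1/4 := by
        calc ((1:ℝ)/2)^(m+1) ≤ (1/2)^2 :=
              pow_le_pow_of_le_one (by norm_num) (by norm_num) (by omega)
          _ = 1/4 := by norm_num
      have hpos : (0:ℝ) < (1/2)^(m+1) := by positivity
      have hs : ((1:ℝ)/2)^(m+2) = (1/2)^(m+1) * (1/2) := pow_succ _ _
      have h1 : (0:ℝ) ≤ 1 - (1/2:ℝ)^(m+2) := by nlinarith
      nlinarith [mul_le_mul_of_nonneg_right ih h1]

lemma prod_q_ge (q : ℝ) (hq : 2 ≤ q) (d : ℕ) :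
    (1/4 : ℝ) ≤ ∏ j ∈ Finset.range d, (1 - (1/q)^(j+1)) := by
  have h0 : (0:ℝ) < q := by linarith
  have hle : ∀ j ∈ Finset.range d, (1 - (1/2:ℝ)^(j+1)) ≤ 1 - (1/q)^(j+1) := by
    intro j _
    have : (1/q:ℝ)^(j+1) ≤ (1/2)^(j+1) := by
      apply pow_le_pow_left₀ (by positivity)
      rw [div_le_div_iff₀ h0 (by norm_num)]; linarith
    linarith
  have hnn : ∀ j ∈ Finset.range d, (0:ℝ) ≤ 1 - (1/2:ℝ)^(j+1) := by
    intro j _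
    have : ((1:ℝ)/2)^(j+1) ≤ 1 := by apply pow_le_one₀ <;> norm_num
    linarith
  have h1 := Finset.prod_le_prod hnn hle
  have h2 := prod_half_ge d
  have h3 : (0:ℝ) < (1/2:ℝ)^(d+1) := by positivity
  linarith

end AuxIneq

section AuxCount

variable {F V : Type*} [Field F] [AddCommGroup V] [Module F V] [FiniteDimensional F V]

lemma card_T (U : Submodule F V) (d : ℕ) :
    Nat.card {v : Fin d → V // LinearIndependent F (U.mkQ ∘ v)}
      = Nat.card {u : Fin d → V ⧸ U // LinearIndependent F u} * Nat.card U ^ d := by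
  obtain ⟨σ, hσ⟩ := U.mkQ.exists_rightInverse_of_surjective U.range_mkQ
  have hσ' : ∀ y, U.mkQ (σ y) = y := fun y => congrArg (fun f => f y) hσ
  have e : {v : Fin d → V // LinearIndependent F (U.mkQ ∘ v)}
      ≃ {u : Fin d → V ⧸ U // LinearIndependent F u} × (Fin d → U) :=
    { toFun := fun v => ⟨⟨U.mkQ ∘ v.1, v.2⟩, fun i =>
        ⟨v.1 i - σ (U.mkQ (v.1 i)), by
          have h0 : U.mkQ (v.1 i - σ (U.mkQ (v.1 i))) = 0 := by
            rw [map_sub, hσ', sub_self]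
          rwa [← LinearMap.mem_ker, U.ker_mkQ] at h0⟩⟩
      invFun := fun p => ⟨fun i => σ (p.1.1 i) + (p.2 i : V), by
        have hc : (U.mkQ ∘ fun i => σ (p.1.1 i) + (p.2 i : V)) = p.1.1 := by
          funext i
          have hm : (p.2 i : V) ∈ LinearMap.ker U.mkQ := by
            rw [U.ker_mkQ]; exact (p.2 i).2
          simp only [Function.comp_apply, map_add, hσ', LinearMap.mem_ker.mp hm, add_zero]
        rw [hc]; exact p.1.2⟩
      left_inv := fun v => by
        apply Subtype.ext; funext i; simp
      right_inv := fun p => by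
        have hm : ∀ i, (p.2 i : V) ∈ LinearMap.ker U.mkQ := fun i => by
          rw [U.ker_mkQ]; exact (p.2 i).2
        refine Prod.ext ?_ ?_
        · apply Subtype.ext; funext i
          simp [map_add, hσ', LinearMap.mem_ker.mp (hm i)]
        · funext i; apply Subtype.ext
          simp [map_add, hσ', LinearMap.mem_ker.mp (hm i)] }
  rw [Nat.card_congr e, Nat.card_prod, Nat.card_pi, Finset.prod_const, Finset.card_univ,
    Fintype.card_fin]

lemma span_range_coe_eq (W : Submodule F V) {d : ℕ} (hW : finrank F W = d)
    (u : Fin d → W) (hu : LinearIndependent F u) :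
    span F (Set.range fun i => (u i : V)) = W := by
  have hspan : span F (Set.range u) = ⊤ := by
    apply Submodule.eq_top_of_finrank_eq
    rw [finrank_span_eq_card hu, Fintype.card_fin, hW]
  have h : (fun i => (u i : V)) = W.subtype ∘ u := rfl
  rw [h, Set.range_comp, ← Submodule.map_span, hspan, Submodule.map_subtype_top]

lemma card_fiber (U W : Submodule F V) {d : ℕ} (hW : finrank F W = d) (hWU : W ⊓ U = ⊥) :
    Nat.card {v : Fin d → V // LinearIndependent F (U.mkQ ∘ v) ∧ span F (Set.range v) = W}
      = Nat.card {u : Fin d → W // LinearIndependent F u} := by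
  refine Nat.card_congr
    { toFun := fun v => ⟨fun i => ⟨v.1 i, v.2.2.le (subset_span (Set.mem_range_self i))⟩, ?_⟩
      invFun := fun u => ⟨fun i => (u.1 i : V), ?_, span_range_coe_eq W hW u.1 u.2⟩
      left_inv := fun v => by apply Subtype.ext; funext i; rfl
      right_inv := fun u => by apply Subtype.ext; funext i; rfl }
  · have hv1 : LinearIndependent F v.1 := LinearIndependent.of_comp U.mkQ v.2.1
    exact LinearIndependent.of_comp W.subtype hv1
  · have hv1 : LinearIndependent F (fun i => (u.1 i : V)) :=
      u.2.map' W.subtype W.ker_subtype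
    have h2 := hv1.map (f := U.mkQ) ?_
    · exact h2
    · rw [span_range_coe_eq W hW u.1 u.2, U.ker_mkQ]
      exact disjoint_iff.mpr hWU

end AuxCount

set_option maxHeartbeats 1000000 in
/-- if `V` is an `n`-dimensional space over `𝔽_q`, `U ≤ V` is
`k`-dimensional, and `k + d ≤ n`, the number of `d`-dimensional subspaces `W`
with `W ∩ U = {0}` equals `∏_{i=1}^{d}(q^n - q^{k+i-1}) / ∏_{i=1}^{d}(q^d - q^{i-1})`,
and is at least `(1/4) [n choose d]_q`. -/
theorem card_complementary_subspaces (q p s n k d : ℕ) (hp : p.Prime) (hs : 0 < s)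
    (hq : q = p ^ s) (hkd : k + d ≤ n)
    (F : Type) [Field F] [Fintype F] (hF : Fintype.card F = q)
    (V : Type) [AddCommGroup V] [Module F V] [FiniteDimensional F V]
    (hV : finrank F V = n) (U : Submodule F V) (hU : finrank F U = k) :
    (Nat.card {W : Submodule F V // finrank F W = d ∧ W ⊓ U = ⊥} : ℝ) =
      (∏ i ∈ Finset.range d, ((q : ℝ) ^ n - (q : ℝ) ^ (k + i))) /
        (∏ i ∈ Finset.range d, ((q : ℝ) ^ d - (q : ℝ) ^ i)) ∧
    (Nat.card {W : Submodule F V // finrank F W = d ∧ W ⊓ U = ⊥} : ℝ) ≥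
      (1 / 4) * gaussBinom (q : ℝ) n d := by
  have hq2 : 2 ≤ q := by
    rw [hq]; exact Nat.one_lt_pow hs.ne' hp.one_lt
  haveI : Finite V := Module.finite_of_finite F
  haveI : Finite (Submodule F V) :=
    Finite.of_injective _ (SetLike.coe_injective (A := Submodule F V))
  have hkn : k ≤ n := by omega
  have hdnk : d ≤ n - k := by omega
  haveI : Finite (V ⧸ U) := Quotient.finite _
  have hQrank : finrank F (V ⧸ U) = n - k := by
    have h := U.finrank_quotient_add_finrank
    rw [hV, hU] at h; omega
  -- cardinality of independent tuples in the quotient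
  have hTq : Nat.card {u : Fin d → V ⧸ U // LinearIndependent F u}
      = ∏ i ∈ Finset.range d, (q ^ (n - k) - q ^ i) := by
    rw [card_linearIndependent (by rw [hQrank]; exact hdnk)]
    rw [← Fin.prod_univ_eq_prod_range (fun i => q ^ (n-k) - q ^ i) d]
    exact Finset.prod_congr rfl fun i _ => by rw [hF, hQrank]
  have hUcard : Nat.card U = q ^ k := by
    letI : Fintype U := Fintype.ofFinite _
    rw [Nat.card_eq_fintype_card, card_eq_pow_finrank (K := F) (V := U), hF, hU]
  -- T := independent-after-quotient tuples
  have hT : Nat.card {v : Fin d → V // LinearIndependent F (U.mkQ ∘ v)}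
      = ∏ i ∈ Finset.range d, (q ^ n - q ^ (k + i)) := by
    rw [card_T U d, hTq, hUcard]
    have hc : (q ^ k) ^ d = ∏ _i ∈ Finset.range d, q ^ k := by
      rw [Finset.prod_const, Finset.card_range]
    rw [hc, ← Finset.prod_mul_distrib]
    refine Finset.prod_congr rfl fun i _ => ?_
    rw [Nat.sub_mul, ← pow_add, ← pow_add, Nat.sub_add_cancel hkn, add_comm i k]
  -- the map from tuples to subspaces
  have hWd : ∀ v : {v : Fin d → V // LinearIndependent F (U.mkQ ∘ v)},
      finrank F (span F (Set.range v.1)) = d := fun v => by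
    rw [finrank_span_eq_card (LinearIndependent.of_comp U.mkQ v.2), Fintype.card_fin]
  have hWUbot : ∀ v : {v : Fin d → V // LinearIndependent F (U.mkQ ∘ v)},
      span F (Set.range v.1) ⊓ U = ⊥ := by
    intro v
    rw [eq_bot_iff]
    rintro x hx
    obtain ⟨hx1, hx2⟩ := Submodule.mem_inf.mp hx
    obtain ⟨c, hc⟩ := (mem_span_range_iff_exists_fun F).mp hx1
    have h0 : ∑ i, c i • (U.mkQ ∘ v.1) i = 0 := by
      simp only [Function.comp_apply, ← map_smul, ← map_sum]
      rw [hc, ← LinearMap.mem_ker, U.ker_mkQ]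
      exact hx2
    have hz := Fintype.linearIndependent_iff.mp v.2 c h0
    have hx0 : x = 0 := by rw [← hc]; simp [hz]
    simp [hx0]
  let f : {v : Fin d → V // LinearIndependent F (U.mkQ ∘ v)} →
      {W : Submodule F V // finrank F W = d ∧ W ⊓ U = ⊥} :=
    fun v => ⟨span F (Set.range v.1), hWd v, hWUbot v⟩
  letI : Fintype {W : Submodule F V // finrank F W = d ∧ W ⊓ U = ⊥} := Fintype.ofFinite _
  have hsig : Nat.card {v : Fin d → V // LinearIndependent F (U.mkQ ∘ v)}
      = ∑ W : {W : Submodule F V // finrank F W = d ∧ W ⊓ U = ⊥},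
          Nat.card {t // f t = W} := by
    rw [← Nat.card_congr (Equiv.sigmaFiberEquiv f)]
    letI : ∀ W : {W : Submodule F V // finrank F W = d ∧ W ⊓ U = ⊥},
        Fintype {t // f t = W} := fun W => Fintype.ofFinite _
    rw [Nat.card_eq_fintype_card, Fintype.card_sigma]
    exact Finset.sum_congr rfl fun W _ => (Nat.card_eq_fintype_card).symm
  have hfib : ∀ W : {W : Submodule F V // finrank F W = d ∧ W ⊓ U = ⊥},
      Nat.card {t // f t = W} = ∏ i ∈ Finset.range d, (q ^ d - q ^ i) := by
    intro W
    have e : {t // f t = W} ≃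
        {v : Fin d → V // LinearIndependent F (U.mkQ ∘ v) ∧ span F (Set.range v) = W.1} :=
      { toFun := fun t => ⟨t.1.1, t.1.2, congrArg Subtype.val t.2⟩
        invFun := fun v => ⟨⟨v.1, v.2.1⟩, Subtype.ext v.2.2⟩
        left_inv := fun t => rfl
        right_inv := fun v => rfl }
    rw [Nat.card_congr e, card_fiber U W.1 W.2.1 W.2.2,
      card_linearIndependent (le_of_eq W.2.1.symm)]
    rw [← Fin.prod_univ_eq_prod_range (fun i => q ^ d - q ^ i) d]
    exact Finset.prod_congr rfl fun i _ => by rw [hF, W.2.1]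
  have hmain : Nat.card {W : Submodule F V // finrank F W = d ∧ W ⊓ U = ⊥}
        * (∏ i ∈ Finset.range d, (q ^ d - q ^ i))
      = ∏ i ∈ Finset.range d, (q ^ n - q ^ (k + i)) := by
    rw [← hT, hsig, Finset.sum_congr rfl fun W _ => hfib W, Finset.sum_const,
      smul_eq_mul, Finset.card_univ, Nat.card_eq_fintype_card]
  -- cast to the reals
  have hcastD : ((∏ i ∈ Finset.range d, (q ^ d - q ^ i) : ℕ) : ℝ)
      = ∏ i ∈ Finset.range d, ((q:ℝ) ^ d - (q:ℝ) ^ i) := by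
    rw [Nat.cast_prod]
    refine Finset.prod_congr rfl fun i hi => ?_
    rw [Nat.cast_sub (Nat.pow_le_pow_right (by omega) (Finset.mem_range.mp hi).le)]
    push_cast; ring
  have hcastN : ((∏ i ∈ Finset.range d, (q ^ n - q ^ (k + i)) : ℕ) : ℝ)
      = ∏ i ∈ Finset.range d, ((q:ℝ) ^ n - (q:ℝ) ^ (k + i)) := by
    rw [Nat.cast_prod]
    refine Finset.prod_congr rfl fun i hi => ?_
    have hi' := Finset.mem_range.mp hi
    rw [Nat.cast_sub (Nat.pow_le_pow_right (by omega) (by omega))]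
    push_cast; ring
  have hq1 : (1:ℝ) < (q:ℝ) := by exact_mod_cast hq2
  have hDpos : 0 < ∏ i ∈ Finset.range d, ((q:ℝ) ^ d - (q:ℝ) ^ i) := by
    apply Finset.prod_pos
    intro i hi
    have := pow_lt_pow_right₀ hq1 (Finset.mem_range.mp hi)
    linarith
  have hSr : (Nat.card {W : Submodule F V // finrank F W = d ∧ W ⊓ U = ⊥} : ℝ)
      = (∏ i ∈ Finset.range d, ((q:ℝ) ^ n - (q:ℝ) ^ (k + i))) /
          (∏ i ∈ Finset.range d, ((q:ℝ) ^ d - (q:ℝ) ^ i)) := by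
    have hc := congrArg (Nat.cast : ℕ → ℝ) hmain
    rw [Nat.cast_mul, hcastD, hcastN] at hc
    rw [eq_div_iff hDpos.ne']
    exact hc
  refine ⟨hSr, ?_⟩
  -- the inequality
  have hGDpos : 0 < ∏ i ∈ Finset.range d, ((q:ℝ) ^ (d - i) - 1) := by
    apply Finset.prod_pos
    intro i hi
    have h1 : (1:ℝ) < (q:ℝ) ^ (d - i) :=
      one_lt_pow₀ hq1 (by have := Finset.mem_range.mp hi; omega)
    linarith
  have hGNpos : 0 < ∏ i ∈ Finset.range d, ((q:ℝ) ^ (n - i) - 1) := by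
    apply Finset.prod_pos
    intro i hi
    have h1 : (1:ℝ) < (q:ℝ) ^ (n - i) :=
      one_lt_pow₀ hq1 (by have := Finset.mem_range.mp hi; omega)
    linarith
  have hAB : ∏ i ∈ Finset.range d,
        ((1 - (1/(q:ℝ)) ^ (d - i)) * (((q:ℝ) ^ (n - i) - 1) * ((q:ℝ) ^ d - (q:ℝ) ^ i)))
      ≤ ∏ i ∈ Finset.range d,
        (((q:ℝ) ^ n - (q:ℝ) ^ (k + i)) * ((q:ℝ) ^ (d - i) - 1)) := by
    refine Finset.prod_le_prod ?_ ?_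
    · intro i hi
      have hi' := Finset.mem_range.mp hi
      have h1 : (1:ℝ) < (q:ℝ) ^ (d - i) := one_lt_pow₀ hq1 (by omega)
      have h2 : (1:ℝ) ≤ (q:ℝ) ^ (n - i) := one_le_pow₀ hq1.le
      have h3 : (q:ℝ) ^ i ≤ (q:ℝ) ^ d := pow_le_pow_right₀ hq1.le (by omega)
      have h4 : (1/(q:ℝ)) ^ (d - i) ≤ 1 := by
        apply pow_le_one₀ (by positivity)
        rw [div_le_one (by linarith)]; linarith
      have h5 : 0 ≤ 1 - (1/(q:ℝ)) ^ (d - i) := by linarith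
      exact mul_nonneg h5 (mul_nonneg (by linarith) (by linarith))
    · intro i hi
      have hi' := Finset.mem_range.mp hi
      have hb : (1:ℝ) < (q:ℝ) ^ (d - i) := one_lt_pow₀ hq1 (by omega)
      have hb0 : ((q:ℝ) ^ (d - i)) ≠ 0 := by positivity
      have hc : (0:ℝ) < (q:ℝ) ^ i := by positivity
      have ha : (q:ℝ) ^ (n - i) = (q:ℝ) ^ (n - d) * (q:ℝ) ^ (d - i) := by
        rw [← pow_add]; congr 1; omega
      have hqd : (q:ℝ) ^ d = (q:ℝ) ^ i * (q:ℝ) ^ (d - i) := by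
        rw [← pow_add]; congr 1; omega
      have hqn : (q:ℝ) ^ n = (q:ℝ) ^ i * (q:ℝ) ^ (n - i) := by
        rw [← pow_add]; congr 1; omega
      have hqki : (q:ℝ) ^ (k + i) = (q:ℝ) ^ i * (q:ℝ) ^ k := by
        rw [← pow_add]; congr 1; omega
      have htu : (q:ℝ) ^ k ≤ (q:ℝ) ^ (n - d) := pow_le_pow_right₀ hq1.le (by omega)
      have hinv : (1/(q:ℝ)) ^ (d - i) = 1 / ((q:ℝ) ^ (d - i)) := by
        rw [div_pow, one_pow]
      have hnn : 0 ≤ 1 - 1/((q:ℝ) ^ (d - i)) := by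
        rw [sub_nonneg, div_le_one (by positivity)]; exact hb.le
      have hkey : (1 - 1/((q:ℝ) ^ (d - i))) * ((q:ℝ) ^ (n - i) - 1)
          ≤ (q:ℝ) ^ (n - i) - (q:ℝ) ^ k := by
        have h1 : (1 - 1/((q:ℝ) ^ (d - i))) * ((q:ℝ) ^ (n - i) - 1)
            ≤ (1 - 1/((q:ℝ) ^ (d - i))) * (q:ℝ) ^ (n - i) := by nlinarith
        have h2 : (1 - 1/((q:ℝ) ^ (d - i))) * (q:ℝ) ^ (n - i)
            = (q:ℝ) ^ (n - i) - (q:ℝ) ^ (n - d) := by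
          rw [ha]; field_simp
        linarith
      rw [hinv, hqn, hqki, hqd]
      have hbpos : (0:ℝ) ≤ (q:ℝ) ^ (d - i) - 1 := by linarith
      nlinarith [mul_le_mul_of_nonneg_right hkey (mul_nonneg hc.le hbpos)]
  have hrefl : ∏ i ∈ Finset.range d, (1 - (1/(q:ℝ)) ^ (d - i))
      = ∏ j ∈ Finset.range d, (1 - (1/(q:ℝ)) ^ (j + 1)) := by
    rw [← Finset.prod_range_reflect (fun j => 1 - (1/(q:ℝ)) ^ (j + 1)) d]
    refine Finset.prod_congr rfl fun j hj => ?_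
    have hj' := Finset.mem_range.mp hj
    have he : d - j = d - 1 - j + 1 := by omega
    rw [he]
  have hC := prod_q_ge (q:ℝ) (by exact_mod_cast hq2) d
  have hfinal : (1/4) * ((∏ i ∈ Finset.range d, ((q:ℝ) ^ (n - i) - 1))
        * ∏ i ∈ Finset.range d, ((q:ℝ) ^ d - (q:ℝ) ^ i))
      ≤ (∏ i ∈ Finset.range d, ((q:ℝ) ^ n - (q:ℝ) ^ (k + i)))
        * ∏ i ∈ Finset.range d, ((q:ℝ) ^ (d - i) - 1) := by
    have hGNDr : 0 ≤ (∏ i ∈ Finset.range d, ((q:ℝ) ^ (n - i) - 1))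
        * ∏ i ∈ Finset.range d, ((q:ℝ) ^ d - (q:ℝ) ^ i) :=
      mul_nonneg hGNpos.le hDpos.le
    calc (1/4) * ((∏ i ∈ Finset.range d, ((q:ℝ) ^ (n - i) - 1))
          * ∏ i ∈ Finset.range d, ((q:ℝ) ^ d - (q:ℝ) ^ i))
        ≤ (∏ j ∈ Finset.range d, (1 - (1/(q:ℝ)) ^ (j + 1)))
          * ((∏ i ∈ Finset.range d, ((q:ℝ) ^ (n - i) - 1))
            * ∏ i ∈ Finset.range d, ((q:ℝ) ^ d - (q:ℝ) ^ i)) :=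
          mul_le_mul_of_nonneg_right hC hGNDr
      _ = ∏ i ∈ Finset.range d,
            ((1 - (1/(q:ℝ)) ^ (d - i)) * (((q:ℝ) ^ (n - i) - 1) * ((q:ℝ) ^ d - (q:ℝ) ^ i))) := by
          rw [Finset.prod_mul_distrib, Finset.prod_mul_distrib, hrefl]
      _ ≤ ∏ i ∈ Finset.range d,
            (((q:ℝ) ^ n - (q:ℝ) ^ (k + i)) * ((q:ℝ) ^ (d - i) - 1)) := hAB
      _ = (∏ i ∈ Finset.range d, ((q:ℝ) ^ n - (q:ℝ) ^ (k + i)))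
            * ∏ i ∈ Finset.range d, ((q:ℝ) ^ (d - i) - 1) := Finset.prod_mul_distrib
  rw [hSr, ge_iff_le]
  simp only [gaussBinom]
  have h1 : (1/4 : ℝ) * ((∏ i ∈ Finset.range d, ((q:ℝ) ^ (n - i) - 1)) /
        (∏ i ∈ Finset.range d, ((q:ℝ) ^ (d - i) - 1)))
      = ((1/4) * ((∏ i ∈ Finset.range d, ((q:ℝ) ^ (n - i) - 1))
          * ∏ i ∈ Finset.range d, ((q:ℝ) ^ d - (q:ℝ) ^ i)))
        / ((∏ i ∈ Finset.range d, ((q:ℝ) ^ (d - i) - 1))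
          * ∏ i ∈ Finset.range d, ((q:ℝ) ^ d - (q:ℝ) ^ i)) := by
    field_simp
  have h2 : (∏ i ∈ Finset.range d, ((q:ℝ) ^ n - (q:ℝ) ^ (k + i))) /
        (∏ i ∈ Finset.range d, ((q:ℝ) ^ d - (q:ℝ) ^ i))
      = ((∏ i ∈ Finset.range d, ((q:ℝ) ^ n - (q:ℝ) ^ (k + i)))
          * ∏ i ∈ Finset.range d, ((q:ℝ) ^ (d - i) - 1))
        / ((∏ i ∈ Finset.range d, ((q:ℝ) ^ (d - i) - 1))
          * ∏ i ∈ Finset.range d, ((q:ℝ) ^ d - (q:ℝ) ^ i)) := by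
    rw [div_eq_div_iff hDpos.ne' (by positivity)]
    ring
  rw [h1, h2]
  exact (div_le_div_iff_of_pos_right (mul_pos hGDpos hDpos)).mpr hfinal
end

section
/- Let $q$ be a prime power and $V = \mathbb{F}_q^n$. If $\mathcal{F} \subset \mathrm{GL}(V)$ is 1-intersecting, i.e., for all $\sigma_1, \sigma_2 \in \mathcal{F}$ there exists a nonzero $v \in V$ with $\sigma_1(v) = \sigma_2(v)$, then $|\mathcal{F}| \le |\mathrm{GL}(\mathbb{F}_q^n)| / (q^n - 1)$. -/
open Polynomial

/-- For a finite field `F` of cardinality `q` and `n ≠ 0`, there exists a field extension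
`K` of `F` with `q ^ n` elements. -/
lemma exists_field_extension_card (p s n : ℕ) (hp : p.Prime) (hs : 0 < s) (hn : n ≠ 0)
    (F : Type) [Field F] [Fintype F] (hF : Fintype.card F = p ^ s) :
    ∃ (K : Type) (_ : Field K) (_ : Algebra F K) (_ : Fintype K),
      Fintype.card K = (p ^ s) ^ n := by
  haveI : Fact p.Prime := ⟨hp⟩
  -- `F` has characteristic `p`
  haveI charF : CharP F p := by
    obtain ⟨r, hr⟩ := CharP.exists F
    obtain ⟨m, hrprime, hcard⟩ := FiniteField.card F r
    have hdvd : p ∣ r ^ (m : ℕ) := by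
      rw [← hcard, hF]; exact dvd_pow_self p hs.ne'
    have : p = r := (Nat.prime_dvd_prime_iff_eq hp hrprime).mp (hp.dvd_of_dvd_pow hdvd)
    rwa [this]
  have hm : s * n ≠ 0 := by positivity
  set g : F[X] := X ^ p ^ (s * n) - X with hg
  let K := g.SplittingField
  haveI : FiniteDimensional F K := IsSplittingField.finiteDimensional K g
  haveI : Finite K := Module.finite_of_finite F
  haveI fK : Fintype K := Fintype.ofFinite K
  haveI charK : CharP K p := charP_of_injective_algebraMap' (A := K) F p
  have aux : g ≠ 0 := FiniteField.X_pow_card_pow_sub_X_ne_zero _ hm hp.one_lt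
  have hpdvd : p ∣ p ^ (s * n) := dvd_pow_self p hm
  have key : Fintype.card (g.rootSet K) = g.natDegree :=
    card_rootSet_eq_natDegree (galois_poly_separable p _ hpdvd)
      (SplittingField.splits g)
  have nat_degree_eq : g.natDegree = p ^ (s * n) :=
    FiniteField.X_pow_card_pow_sub_X_natDegree_eq _ hm hp.one_lt
  rw [nat_degree_eq] at key
  refine ⟨K, inferInstance, inferInstance, fK, ?_⟩
  have hpow : (p ^ s) ^ n = p ^ (s * n) := (pow_mul p s n).symm
  rw [hpow, ← key]
  suffices huniv : g.rootSet K = Set.univ by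
    exact Fintype.card_congr ((Equiv.Set.univ K).symm.trans (Equiv.setCongr huniv.symm))
  rw [Set.eq_univ_iff_forall]
  suffices h' : ∀ (x) (_ : x ∈ (⊤ : Subalgebra F K)), x ∈ g.rootSet K by simpa using h'
  rw [← SplittingField.adjoin_rootSet]
  simp_rw [Algebra.mem_adjoin_iff]
  intro x hx
  refine Subring.closure_induction ?_ ?_ ?_ ?_ ?_ ?_ hx <;> simp_rw [mem_rootSet_of_ne aux]
  · rintro x (⟨r, rfl⟩ | hx)
    · simp only [g, map_sub, map_pow, aeval_X]
      have hr : r ^ p ^ (s * n) = r := by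
        rw [pow_mul, ← hF]; exact FiniteField.pow_card_pow n r
      rw [← map_pow, hr, sub_self]
    · rwa [mem_rootSet_of_ne aux] at hx
  · rw [← coeff_zero_eq_aeval_zero']
    simp only [g, coeff_X_pow, coeff_X_zero, sub_zero, _root_.map_eq_zero, ite_eq_right_iff,
      one_ne_zero, coeff_sub]
    intro hzero
    exact absurd hzero.symm (pow_ne_zero _ hp.pos.ne')
  · simp [g]
  · simp only [g, aeval_X_pow, aeval_X, map_sub, sub_eq_zero]
    intro x y _ _ hx hy
    rw [add_pow_char_pow, hx, hy]
  · intro x _ hx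
    simp only [g, sub_eq_zero, aeval_X_pow, aeval_X, map_sub, sub_neg_eq_add] at *
    rw [neg_pow, hx, neg_one_pow_char_pow]
    ring
  · simp only [g, aeval_X_pow, aeval_X, map_sub, mul_pow, sub_eq_zero]
    intro x y _ _ hx hy
    rw [hx, hy]

/-- if `𝓕 ⊆ GL(𝔽_q^n)` is 1-intersecting (any two of its elements agree
on some nonzero vector), then `|𝓕| ≤ |GL(𝔽_q^n)| / (q^n - 1)`. -/
theorem one_intersecting_bound (q p s n : ℕ) (hp : p.Prime) (hs : 0 < s) (hq : q = p ^ s)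
    (F : Type) [Field F] [Fintype F] (hF : Fintype.card F = q)
    (𝓕 : Finset ((Fin n → F) →ₗ[F] (Fin n → F)))
    (hbij : ∀ σ ∈ 𝓕, Function.Bijective σ)
    (hint : ∀ σ₁ ∈ 𝓕, ∀ σ₂ ∈ 𝓕, ∃ v : Fin n → F, v ≠ 0 ∧ σ₁ v = σ₂ v) :
    𝓕.card * (q ^ n - 1) ≤
      Nat.card {σ : (Fin n → F) →ₗ[F] (Fin n → F) // Function.Bijective σ} := by
  rcases Nat.eq_zero_or_pos n with rfl | hn
  · simp
  subst hq
  obtain ⟨K, _, _, _, hK⟩ := exists_field_extension_card p s n hp hs hn.ne' F hF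
  haveI : Finite K := Finite.of_fintype K
  haveI : Module.Finite F K := Module.Finite.of_finite
  have hq2 : 1 < p ^ s := Nat.one_lt_pow hs.ne' hp.one_lt
  -- `finrank F K = n`
  have hfr : Module.finrank F K = n := by
    have hcard : Fintype.card K = Fintype.card F ^ Module.finrank F K :=
      Module.card_eq_pow_finrank
    rw [hK, hF] at hcard
    exact (Nat.pow_right_injective hq2 hcard).symm
  let b : Module.Basis (Fin n) F K := Module.finBasisOfFinrankEq F K hfr
  let e : K ≃ₗ[F] (Fin n → F) := b.equivFun
  -- multiplication by a unit of `K`, transported to `Fin n → F`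
  let M : Kˣ → ((Fin n → F) ≃ₗ[F] (Fin n → F)) := fun c =>
    e.symm.trans (((LinearEquiv.ofLinear (LinearMap.mulLeft F (c : K))
      (LinearMap.mulLeft F ((c⁻¹ : Kˣ) : K))
      (by ext x; simp) (by ext x; simp) : K ≃ₗ[F] K)).trans e)
  have hM : ∀ (c : Kˣ) (x : K), M c (e x) = e ((c : K) * x) := by
    intro c x
    simp [M, LinearEquiv.trans_apply]
  haveI : Finite ((Fin n → F) →ₗ[F] (Fin n → F)) :=
    Finite.of_injective _ (DFunLike.coe_injective
      (F := (Fin n → F) →ₗ[F] (Fin n → F)))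
  let Φ : {x // x ∈ 𝓕} × Kˣ →
      {σ : (Fin n → F) →ₗ[F] (Fin n → F) // Function.Bijective σ} := fun pc =>
    ⟨(pc.1 : (Fin n → F) →ₗ[F] (Fin n → F)) ∘ₗ (M pc.2).toLinearMap,
      (hbij _ pc.1.2).comp (M pc.2).bijective⟩
  have hΦ : Function.Injective Φ := by
    rintro ⟨⟨σ₁, h₁⟩, c₁⟩ ⟨⟨σ₂, h₂⟩, c₂⟩ heq
    simp only [Φ, Subtype.mk_eq_mk] at heq
    obtain ⟨v, hv0, hv⟩ := hint σ₁ h₁ σ₂ h₂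
    set u : Fin n → F := e (((c₁⁻¹ : Kˣ) : K) * e.symm v) with hu
    have happ := LinearMap.congr_fun heq u
    simp only [LinearMap.coe_comp, Function.comp_apply, LinearEquiv.coe_coe] at happ
    have hM1 : M c₁ u = v := by
      rw [hu, hM, ← mul_assoc]
      simp
    have hM2 : M c₂ u = e (((c₂ : K) * ((c₁⁻¹ : Kˣ) : K)) * e.symm v) := by
      rw [hu, hM, mul_assoc]
    rw [hM1, hM2, hv] at happ
    have hev : e.symm v ≠ 0 := by
      intro h0
      apply hv0
      have := congrArg e h0
      simpa using this
    have hc : (c₂ : K) * ((c₁⁻¹ : Kˣ) : K) = 1 := by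
      have := (hbij σ₂ h₂).1 happ.symm
      have h2 := congrArg e.symm this
      rw [LinearEquiv.symm_apply_apply] at h2
      refine mul_right_cancel₀ hev ?_
      rw [one_mul]
      exact h2
    have hcc : c₁ = c₂ := by
      have : c₂ * c₁⁻¹ = 1 := Units.ext (by rw [Units.val_mul, Units.val_one]; exact hc)
      rw [mul_inv_eq_one] at this
      exact this.symm
    subst hcc
    have hσ : σ₁ = σ₂ := by
      apply LinearMap.ext
      intro w
      obtain ⟨u', hu'⟩ := (M c₁).surjective w
      have h4 := LinearMap.congr_fun heq u'
      simpa [LinearMap.comp_apply, hu'] using h4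
    simp [hσ]
  haveI : DecidableEq K := Classical.decEq K
  have hcardP : Nat.card ({x // x ∈ 𝓕} × Kˣ) = 𝓕.card * ((p ^ s) ^ n - 1) := by
    rw [Nat.card_eq_fintype_card, Fintype.card_prod, Fintype.card_coe,
      Fintype.card_units, hK]
  calc 𝓕.card * ((p ^ s) ^ n - 1) = Nat.card ({x // x ∈ 𝓕} × Kˣ) := hcardP.symm
    _ ≤ _ := Nat.card_le_card_of_injective Φ hΦ
end
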